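/- Let t be a μωT_s-expression of category T and p a μωT_s-expression of category P over Σ (free variables treated as letters), such that no subexpression of t or p denotes the empty set and no subexpression of category T other than the symbol ε denotes {ε}. Then: if t has a subexpression of the form t₁×t₂ with t₂ ≠ ε, the language |t| contains a word which is not well-ordered; and if p has a subexpression of the form t₁×t₂ with t₂ ≠ ε, then |p| contains a pair (u,v) such that either v ≠ ε, or one of u, v is not well-ordered. -/

import Mathlib

/-! ## Countable words over an alphabet -/

/-- A "preword" over `A`: a countable linear order realized as a set of rationals,
together with a labeling of its elements by letters of `A`. -/
structure PreWord (A : Type) : Type where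
  carrier : Set ℚ
  label : carrier → A

namespace PreWord

/-- Two prewords are equivalent iff there is an order isomorphism between their
carriers preserving the labels. -/
def Equiv {A : Type} (u v : PreWord A) : Prop :=
  ∃ f : u.carrier ≃o v.carrier, ∀ q, v.label (f q) = u.label q

theorem Equiv.refl {A : Type} (u : PreWord A) : Equiv u u :=
  ⟨OrderIso.refl _, fun _ => rfl⟩

theorem Equiv.symm {A : Type} {u v : PreWord A} : Equiv u v → Equiv v u := by
  rintro ⟨f, hf⟩
  exact ⟨f.symm, fun q => by rw [← hf (f.symm q), OrderIso.apply_symm_apply]⟩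

theorem Equiv.trans {A : Type} {u v w : PreWord A} : Equiv u v → Equiv v w → Equiv u w := by
  rintro ⟨f, hf⟩ ⟨g, hg⟩
  exact ⟨f.trans g, fun q => by rw [OrderIso.trans_apply, hg, hf]⟩

instance setoid (A : Type) : Setoid (PreWord A) where
  r := Equiv
  iseqv := ⟨Equiv.refl, Equiv.symm, Equiv.trans⟩

end PreWord

/-- A countable word over `A`: an isomorphism class of labeled countable linear orders. -/
def Word (A : Type) : Type := Quotient (PreWord.setoid A)

namespace Word

/-- The word determined by an arbitrary countable linear order `I` with labeling `lab`. -/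
noncomputable def of {I A : Type} [LinearOrder I] [Countable I] (lab : I → A) : Word A :=
  let e : I ↪o ℚ := (Order.embedding_from_countable_to_dense I ℚ).some
  Quotient.mk _ ⟨Set.range e, fun q => lab (Classical.choose q.2)⟩

/-- The empty word. -/
def eps (A : Type) : Word A :=
  Quotient.mk _ ⟨∅, fun q => absurd q.2 (Set.notMem_empty q.1)⟩

/-- The one-letter word. -/
def letter {A : Type} (a : A) : Word A :=
  Quotient.mk _ ⟨{(0 : ℚ)}, fun _ => a⟩

/-- Relabeling of a word along a function. -/
noncomputable def map {A B : Type} (g : A → B) (w : Word A) : Word B :=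
  Quotient.mk _ ⟨(Quotient.out w).carrier, fun q => g ((Quotient.out w).label q)⟩

instance sigmaLexCountable {I : Type} (κ : I → Type) [Countable I] [∀ i, Countable (κ i)] :
    Countable (Σₗ i, κ i) :=
  inferInstanceAs (Countable (Σ i, κ i))

/-- Generalized concatenation `∏_{i ∈ I} w i` of words over a countable linear order `I`:
the word on the lexicographically ordered disjoint sum of the underlying orders. -/
noncomputable def concat {I A : Type} [LinearOrder I] [Countable I] (w : I → Word A) : Word A :=
  Word.of (I := Σₗ i : I, (Quotient.out (w i)).carrier)
    (fun p => (Quotient.out (w (ofLex p).1)).label (ofLex p).2)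

/-- Binary concatenation of words. -/
noncomputable def append {A : Type} (u v : Word A) : Word A :=
  concat (I := Fin 2) ![u, v]

/-- The finite word given by a list of letters. -/
noncomputable def ofList {A : Type} (l : List A) : Word A :=
  Word.of (I := Fin l.length) l.get

/-- Concatenation of a finite list of words. -/
noncomputable def concatList {A : Type} (l : List (Word A)) : Word A :=
  concat (I := Fin l.length) l.get

/-- A word is scattered if its underlying linear order has no suborder isomorphic to `ℚ`,
equivalently there is no order embedding of `ℚ` into it. -/
def IsScattered {A : Type} (w : Word A) : Prop :=
  IsEmpty (ℚ ↪o (Quotient.out w).carrier)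

/-- A word is well-ordered if its underlying linear order has no suborder isomorphic to the
negative integers, i.e. there is no order embedding of `ℕᵒᵈ` into it. -/
def IsWellOrdered {A : Type} (w : Word A) : Prop :=
  IsEmpty (ℕᵒᵈ ↪o (Quotient.out w).carrier)

end Word

/-! ## Languages and their operations -/

namespace Lang

/-- Concatenation of languages. -/
noncomputable def conc {A : Type} (L₁ L₂ : Set (Word A)) : Set (Word A) :=
  {w | ∃ u ∈ L₁, ∃ v ∈ L₂, w = Word.append u v}

/-- ω-power of a language: `L^ω = {∏_{i∈ℕ} w i : ∀ i, w i ∈ L}`. -/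
noncomputable def omegaPow {A : Type} (L : Set (Word A)) : Set (Word A) :=
  {w | ∃ f : ℕ → Word A, (∀ i, f i ∈ L) ∧ w = Word.concat f}

end Lang
/-! ## Pairs of words and their operations -/

namespace PairLang

/-- Product of pairs of words: `(u,v)·(u',v') = (uu', v'v)`. -/
noncomputable def pairMul {A : Type} (p q : Word A × Word A) : Word A × Word A :=
  (Word.append p.1 q.1, Word.append q.2 p.2)

/-- Concatenation of sets of pairs of words. -/
noncomputable def conc {A : Type} (L L' : Set (Word A × Word A)) : Set (Word A × Word A) :=
  {r | ∃ p ∈ L, ∃ q ∈ L', r = pairMul p q}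

/-- Kleene star of a set of pairs of words: `L^* = {(ε,ε)} ∪ L ∪ L·L ∪ ⋯`. -/
noncomputable def star {A : Type} (L : Set (Word A × Word A)) : Set (Word A × Word A) :=
  {r | ∃ l : List (Word A × Word A), (∀ p ∈ l, p ∈ L) ∧
        r = l.foldr pairMul (Word.eps A, Word.eps A)}

instance sumLexCountable : Countable (ℕ ⊕ₗ ℕᵒᵈ) :=
  inferInstanceAs (Countable (ℕ ⊕ ℕᵒᵈ))

/-- The word `∏_{i∈ℕ}(u_i, v_i) = (u₀u₁⋯)(⋯v₁v₀)`: the concatenation of the first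
components in increasing order of `i` followed by the second components in decreasing
order of `i`. -/
noncomputable def omegaWord {A : Type} (f : ℕ → Word A × Word A) : Word A :=
  Word.concat (I := ℕ ⊕ₗ ℕᵒᵈ)
    (fun i => Sum.elim (fun n : ℕ => (f n).1)
      (fun n : ℕᵒᵈ => (f (OrderDual.ofDual n)).2) (ofLex i))

/-- ω-power of a set of pairs of words, a language of words. -/
noncomputable def omegaPow {A : Type} (L : Set (Word A × Word A)) : Set (Word A) :=
  {w | ∃ f : ℕ → Word A × Word A, (∀ i, f i ∈ L) ∧ w = omegaWord f}

/-- `L₁ × L₂ = {(u,v) : u ∈ L₁, v ∈ L₂}`. -/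
def prod {A : Type} (L₁ L₂ : Set (Word A)) : Set (Word A × Word A) :=
  {p | p.1 ∈ L₁ ∧ p.2 ∈ L₂}

end PairLang
/-! ## μωT_s-expressions -/

mutual
  /-- `μωT_s`-expressions of syntactic category `T` over the alphabet `A`:
  `T ::= a | ε | x | T+T | T·T | μx.T | P^ω`. -/
  inductive TS (A : Type) : Type
    | letter : A → TS A
    | eps : TS A
    | var : ℕ → TS A
    | add : TS A → TS A → TS A
    | mul : TS A → TS A → TS A
    | mu : ℕ → TS A → TS A
    | omega : PS A → TS A

  /-- `μωT_s`-expressions of syntactic category `P` over the alphabet `A`: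
  `P ::= T×T | P+P | P·P | P^*`. -/
  inductive PS (A : Type) : Type
    | pair : TS A → TS A → PS A
    | add : PS A → PS A → PS A
    | mul : PS A → PS A → PS A
    | star : PS A → PS A
end

mutual
  /-- The free variables of a `T`-expression. -/
  def TS.free {A : Type} : TS A → Set ℕ
    | .letter _ => ∅
    | .eps => ∅
    | .var x => {x}
    | .add s t => s.free ∪ t.free
    | .mul s t => s.free ∪ t.free
    | .mu x s => s.free \ {x}
    | .omega p => p.free

  /-- The free variables of a `P`-expression. -/
  def PS.free {A : Type} : PS A → Set ℕ
    | .pair s t => s.free ∪ t.free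
    | .add p q => p.free ∪ q.free
    | .mul p q => p.free ∪ q.free
    | .star p => p.free
end

mutual
  /-- The language denoted by a `T`-expression in the environment `ρ`. -/
  noncomputable def TS.den {A : Type} : TS A → (ℕ → Set (Word A)) → Set (Word A)
    | .letter a, _ => {Word.letter a}
    | .eps, _ => {Word.eps A}
    | .var x, ρ => ρ x
    | .add s t, ρ => s.den ρ ∪ t.den ρ
    | .mul s t, ρ => Lang.conc (s.den ρ) (t.den ρ)
    | .mu x s, ρ => sInf {L : Set (Word A) | s.den (Function.update ρ x L) ⊆ L}
    | .omega p, ρ => PairLang.omegaPow (p.den ρ)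

  /-- The set of pairs of words denoted by a `P`-expression in the environment `ρ`. -/
  noncomputable def PS.den {A : Type} : PS A → (ℕ → Set (Word A)) → Set (Word A × Word A)
    | .pair s t, ρ => PairLang.prod (s.den ρ) (t.den ρ)
    | .add p q, ρ => p.den ρ ∪ q.den ρ
    | .mul p q, ρ => PairLang.conc (p.den ρ) (q.den ρ)
    | .star p, ρ => PairLang.star (p.den ρ)
end

mutual
  /-- The `T`-subexpressions of a `T`-expression. -/
  def TS.subT {A : Type} : TS A → Set (TS A)
    | .letter a => {.letter a}
    | .eps => {.eps}
    | .var x => {.var x}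
    | .add s t => insert (.add s t) (s.subT ∪ t.subT)
    | .mul s t => insert (.mul s t) (s.subT ∪ t.subT)
    | .mu x s => insert (.mu x s) s.subT
    | .omega p => insert (.omega p) p.subT

  /-- The `T`-subexpressions of a `P`-expression. -/
  def PS.subT {A : Type} : PS A → Set (TS A)
    | .pair s t => s.subT ∪ t.subT
    | .add p q => p.subT ∪ q.subT
    | .mul p q => p.subT ∪ q.subT
    | .star p => p.subT
end

mutual
  /-- The `P`-subexpressions of a `T`-expression. -/
  def TS.subP {A : Type} : TS A → Set (PS A)
    | .letter _ => ∅
    | .eps => ∅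
    | .var _ => ∅
    | .add s t => s.subP ∪ t.subP
    | .mul s t => s.subP ∪ t.subP
    | .mu _ s => s.subP
    | .omega p => insert p p.subP

  /-- The `P`-subexpressions of a `P`-expression. -/
  def PS.subP {A : Type} : PS A → Set (PS A)
    | .pair s t => insert (.pair s t) (s.subP ∪ t.subP)
    | .add p q => insert (.add p q) (p.subP ∪ q.subP)
    | .mul p q => insert (.mul p q) (p.subP ∪ q.subP)
    | .star p => insert (.star p) p.subP
end

mutual
  /-- Relabeling the letters of a `T`-expression. -/
  def TS.map {A B : Type} (g : A → B) : TS A → TS B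
    | .letter a => .letter (g a)
    | .eps => .eps
    | .var x => .var x
    | .add s t => .add (s.map g) (t.map g)
    | .mul s t => .mul (s.map g) (t.map g)
    | .mu x s => .mu x (s.map g)
    | .omega p => .omega (p.map g)

  /-- Relabeling the letters of a `P`-expression. -/
  def PS.map {A B : Type} (g : A → B) : PS A → PS B
    | .pair s t => .pair (s.map g) (t.map g)
    | .add p q => .add (p.map g) (q.map g)
    | .mul p q => .mul (p.map g) (q.map g)
    | .star p => .star (p.map g)
end

/-- The language denoted by a `T`-expression with its free variables treated as letters:
a language over the alphabet `A ⊕ ℕ` (letters on the left, variables on the right). -/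
noncomputable def TS.denL {A : Type} (t : TS A) : Set (Word (A ⊕ ℕ)) :=
  TS.den (t.map Sum.inl) (fun x => {Word.letter (Sum.inr x)})

/-- The set of pairs of words denoted by a `P`-expression with its free variables treated
as letters. -/
noncomputable def PS.denL {A : Type} (p : PS A) :
    Set (Word (A ⊕ ℕ) × Word (A ⊕ ℕ)) :=
  PS.den (p.map Sum.inl) (fun x => {Word.letter (Sum.inr x)})

section WordLemmas

open Word

theorem out_equiv {A : Type} (x : PreWord A) :
    PreWord.Equiv (Quotient.out (Quotient.mk (PreWord.setoid A) x)) x := by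
  have h := Quotient.exact (Quotient.out_eq (Quotient.mk (PreWord.setoid A) x)); exact h

noncomputable def rangeOrderIso {I : Type} [LinearOrder I] (e : I ↪o ℚ) :
    I ≃o Set.range ⇑e where
  toEquiv := Equiv.ofInjective e e.injective
  map_rel_iff' := by
    intro a b
    simp only [Equiv.ofInjective_apply, Subtype.mk_le_mk]
    exact e.le_iff_le

theorem of_carrier_iso {I A : Type} [LinearOrder I] [Countable I] (lab : I → A) :
    Nonempty ((Quotient.out (Word.of lab)).carrier ≃o I) := by
  obtain ⟨f, -⟩ := out_equiv (A := A)
    ⟨Set.range ((Order.embedding_from_countable_to_dense I ℚ).some),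
      fun q => lab (Classical.choose q.2)⟩
  exact ⟨(show (Quotient.out (Word.of lab)).carrier ≃o _ from f).trans
    (rangeOrderIso _).symm⟩

theorem eps_iff {A : Type} {w : Word A} :
    w = Word.eps A ↔ IsEmpty (Quotient.out w).carrier := by
  constructor
  · rintro rfl
    obtain ⟨f, -⟩ := out_equiv (A := A) ⟨∅, fun q => absurd q.2 (Set.notMem_empty q.1)⟩
    haveI : IsEmpty (↥(∅ : Set ℚ)) := Set.isEmpty_coe_sort.2 rfl
    exact f.toEquiv.isEmpty
  · intro h
    rw [← Quotient.out_eq w]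
    apply Quotient.sound
    haveI : IsEmpty (↥(∅ : Set ℚ)) := Set.isEmpty_coe_sort.2 rfl
    refine ⟨⟨Equiv.equivOfIsEmpty _ _, ?_⟩, fun q => isEmptyElim q⟩
    intro a b
    exact isEmptyElim a

theorem of_eq_eps_iff {I A : Type} [LinearOrder I] [Countable I] (lab : I → A) :
    Word.of lab = Word.eps A ↔ IsEmpty I := by
  obtain ⟨f⟩ := of_carrier_iso lab
  rw [eps_iff]
  exact ⟨fun h => letI := h; f.symm.toEquiv.isEmpty,
    fun h => letI := h; f.toEquiv.isEmpty⟩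

theorem letter_ne_eps {A : Type} (a : A) : Word.letter a ≠ Word.eps A := by
  intro h
  rw [eps_iff] at h
  obtain ⟨f, -⟩ := out_equiv (A := A) ⟨{(0 : ℚ)}, fun _ => a⟩
  exact h.elim (f.symm ⟨(0:ℚ), rfl⟩)

theorem not_isWellOrdered_iff {A : Type} {w : Word A} :
    ¬ w.IsWellOrdered ↔ Nonempty (ℕᵒᵈ ↪o (Quotient.out w).carrier) := by
  rw [Word.IsWellOrdered, not_isEmpty_iff]

end WordLemmas
section SigmaLemmas

theorem isEmpty_sigmaLex {I : Type} [LinearOrder I] (κ : I → Type) [∀ i, LinearOrder (κ i)] :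
    IsEmpty (Σₗ i, κ i) ↔ ∀ i, IsEmpty (κ i) :=
  ⟨fun h i => ⟨fun x => h.elim (toLex ⟨i, x⟩)⟩,
   fun h => ⟨fun x => (h (ofLex x).1).elim (ofLex x).2⟩⟩

/-- Order embedding of a fiber into the lexicographic sigma. -/
def fiberEmb {I : Type} [LinearOrder I] (κ : I → Type) [∀ i, LinearOrder (κ i)] (i : I) :
    κ i ↪o Σₗ j, κ j :=
  OrderEmbedding.ofStrictMono (fun x => toLex ⟨i, x⟩)
    (fun x y hxy => Sigma.Lex.lt_def.2 (Or.inr ⟨rfl, hxy⟩))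

theorem concat_eq_eps_iff {I A : Type} [LinearOrder I] [Countable I] (w : I → Word A) :
    Word.concat w = Word.eps A ↔ ∀ i, w i = Word.eps A := by
  rw [Word.concat, of_eq_eps_iff, isEmpty_sigmaLex]
  exact forall_congr' fun i => (eps_iff (w := w i)).symm

theorem concat_not_wellOrdered_of_fiber {I A : Type} [LinearOrder I] [Countable I]
    (w : I → Word A) (i : I) (h : ¬ (w i).IsWellOrdered) :
    ¬ (Word.concat w).IsWellOrdered := by
  rw [not_isWellOrdered_iff] at h ⊢
  obtain ⟨g⟩ := h
  obtain ⟨iso⟩ := of_carrier_iso (I := Σₗ i : I, (Quotient.out (w i)).carrier)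
    (fun p => (Quotient.out (w (ofLex p).1)).label (ofLex p).2)
  exact ⟨(g.trans (fiberEmb (fun j => (Quotient.out (w j)).carrier) i)).trans iso.symm.toOrderEmbedding⟩

theorem concat_not_wellOrdered_of_desc {I A : Type} [LinearOrder I] [Countable I]
    (w : I → Word A) (emb : ℕᵒᵈ ↪o I) (h : ∀ n : ℕᵒᵈ, w (emb n) ≠ Word.eps A) :
    ¬ (Word.concat w).IsWellOrdered := by
  rw [not_isWellOrdered_iff]
  obtain ⟨iso⟩ := of_carrier_iso (I := Σₗ i : I, (Quotient.out (w i)).carrier)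
    (fun p => (Quotient.out (w (ofLex p).1)).label (ofLex p).2)
  have hne : ∀ n : ℕᵒᵈ, Nonempty (Quotient.out (w (emb n))).carrier := by
    intro n
    exact not_isEmpty_iff.1 (fun he => h n (eps_iff.2 he))
  have pt : ∀ n : ℕᵒᵈ, (Quotient.out (w (emb n))).carrier := fun n => (hne n).some
  refine ⟨(OrderEmbedding.ofStrictMono
    (fun n : ℕᵒᵈ => toLex (⟨emb n, pt n⟩ : Σ i : I, (Quotient.out (w i)).carrier))
    ?_).trans iso.symm.toOrderEmbedding⟩
  intro m n hmn
  exact Sigma.Lex.lt_def.2 (Or.inl (emb.strictMono hmn))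

end SigmaLemmas

section AppendLemmas

theorem append_eq_eps_iff {A : Type} (u v : Word A) :
    Word.append u v = Word.eps A ↔ u = Word.eps A ∧ v = Word.eps A := by
  rw [Word.append, concat_eq_eps_iff, Fin.forall_fin_two]
  simp

theorem append_not_wellOrdered_left {A : Type} {u : Word A} (v : Word A)
    (h : ¬ u.IsWellOrdered) : ¬ (Word.append u v).IsWellOrdered := by
  rw [Word.append]
  refine concat_not_wellOrdered_of_fiber _ 0 ?_
  simpa using h

theorem append_not_wellOrdered_right {A : Type} (u : Word A) {v : Word A}
    (h : ¬ v.IsWellOrdered) : ¬ (Word.append u v).IsWellOrdered := by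
  rw [Word.append]
  refine concat_not_wellOrdered_of_fiber _ 1 ?_
  simpa using h

theorem eps_isWellOrdered (A : Type) : (Word.eps A).IsWellOrdered := by
  haveI : IsEmpty (Quotient.out (Word.eps A)).carrier := eps_iff.1 rfl
  exact ⟨fun g => ‹IsEmpty (Quotient.out (Word.eps A)).carrier›.elim (g (OrderDual.toDual 0))⟩

end AppendLemmas

section OmegaWordLemmas

theorem omegaWord_eq_eps_iff {A : Type} (f : ℕ → Word A × Word A) :
    PairLang.omegaWord f = Word.eps A ↔
      ∀ n, (f n).1 = Word.eps A ∧ (f n).2 = Word.eps A := by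
  rw [PairLang.omegaWord, concat_eq_eps_iff]
  constructor
  · intro h n
    exact ⟨h (toLex (Sum.inl n)), h (toLex (Sum.inr (OrderDual.toDual n)))⟩
  · intro h i
    rcases hi : ofLex i with n | n
    · simpa [hi] using (h n).1
    · simpa [hi] using (h (OrderDual.ofDual n)).2

theorem omegaWord_not_wellOrdered_of_snd_ne_eps {A : Type} (f : ℕ → Word A × Word A)
    (h : ∀ n, (f n).2 ≠ Word.eps A) :
    ¬ (PairLang.omegaWord f).IsWellOrdered := by
  rw [PairLang.omegaWord]
  refine concat_not_wellOrdered_of_desc _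
    (OrderEmbedding.ofStrictMono (fun n : ℕᵒᵈ => toLex (Sum.inr n : ℕ ⊕ ℕᵒᵈ)) ?_) ?_
  · intro m n hmn
    exact Sum.Lex.inr_lt_inr_iff.2 hmn
  · intro n
    exact h (OrderDual.ofDual n)

theorem omegaWord_not_wellOrdered_of_comp {A : Type} (f : ℕ → Word A × Word A) (n : ℕ)
    (h : ¬ (f n).1.IsWellOrdered ∨ ¬ (f n).2.IsWellOrdered) :
    ¬ (PairLang.omegaWord f).IsWellOrdered := by
  rw [PairLang.omegaWord]
  rcases h with h | h
  · refine concat_not_wellOrdered_of_fiber _ (toLex (Sum.inl n)) ?_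
    simpa using h
  · refine concat_not_wellOrdered_of_fiber _ (toLex (Sum.inr (OrderDual.toDual n))) ?_
    simpa using h

end OmegaWordLemmas
section Abstraction

/-- Abstraction of a language: (is nonempty, contains a word ≠ ε). -/
def aW {A : Type} (L : Set (Word A)) : Prop × Prop :=
  (L.Nonempty, ∃ w ∈ L, w ≠ Word.eps A)

/-- Abstraction of a set of pairs. -/
def aP {A : Type} (P : Set (Word A × Word A)) : Prop × Prop :=
  (P.Nonempty, ∃ r ∈ P, r.1 ≠ Word.eps A ∨ r.2 ≠ Word.eps A)

/-- Concretization. -/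
def gW {A : Type} (b : Prop × Prop) : Set (Word A) :=
  {w | b.1 ∧ (w ≠ Word.eps A → b.2)}

theorem aW_gc {A : Type} (L : Set (Word A)) (b : Prop × Prop) :
    aW L ≤ b ↔ L ⊆ gW b := by
  rw [aW, Prod.mk_le_mk]
  constructor
  · rintro ⟨h1, h2⟩ w hw
    exact ⟨h1 ⟨w, hw⟩, fun hne => h2 ⟨w, hw, hne⟩⟩
  · intro h
    constructor
    · rintro ⟨w, hw⟩; exact (h hw).1
    · rintro ⟨w, hw, hne⟩; exact (h hw).2 hne

theorem lfp_transfer {L M : Type*} [CompleteLattice L] [CompleteLattice M]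
    (α : L → M) (γ : M → L) (gc : ∀ l m, α l ≤ m ↔ l ≤ γ m)
    {F : L → L} {G : M → M} (hF : Monotone F) (hG : Monotone G)
    (h : ∀ l, α (F l) = G (α l)) :
    α (sInf {l | F l ≤ l}) = sInf {m | G m ≤ m} := by
  have hα : Monotone α := fun a b hab => (gc _ _).2 (hab.trans ((gc _ _).1 le_rfl))
  apply le_antisymm
  · apply le_sInf
    rintro m hm
    rw [gc]
    refine sInf_le ?_
    show F (γ m) ≤ γ m
    rw [← gc, h]
    exact le_trans (hG ((gc (γ m) m).2 le_rfl)) hm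
  · refine sInf_le ?_
    show G (α _) ≤ α _
    rw [← h]
    apply hα
    refine le_sInf ?_
    intro l hl
    exact le_trans (hF (sInf_le hl)) hl

theorem lfp_prefixed {L : Type*} [CompleteLattice L] {F : L → L} (hF : Monotone F) :
    F (sInf {l | F l ≤ l}) ≤ sInf {l | F l ≤ l} :=
  le_sInf fun l hl => le_trans (hF (sInf_le hl)) hl

mutual
  /-- Abstract denotation of a `T`-expression. -/
  noncomputable def TS.absden {A : Type} : TS A → (ℕ → Prop × Prop) → Prop × Prop
    | .letter _, _ => (True, True)
    | .eps, _ => (True, False)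
    | .var x, σ => σ x
    | .add s t, σ => s.absden σ ⊔ t.absden σ
    | .mul s t, σ => ((s.absden σ).1 ∧ (t.absden σ).1,
        (s.absden σ).1 ∧ (t.absden σ).1 ∧ ((s.absden σ).2 ∨ (t.absden σ).2))
    | .mu x s, σ => sInf {b | s.absden (Function.update σ x b) ≤ b}
    | .omega p, σ => ((p.absden σ).1, (p.absden σ).1 ∧ (p.absden σ).2)

  /-- Abstract denotation of a `P`-expression. -/
  noncomputable def PS.absden {A : Type} : PS A → (ℕ → Prop × Prop) → Prop × Prop
    | .pair s t, σ => ((s.absden σ).1 ∧ (t.absden σ).1,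
        (s.absden σ).1 ∧ (t.absden σ).1 ∧ ((s.absden σ).2 ∨ (t.absden σ).2))
    | .add p q, σ => p.absden σ ⊔ q.absden σ
    | .mul p q, σ => ((p.absden σ).1 ∧ (q.absden σ).1,
        (p.absden σ).1 ∧ (q.absden σ).1 ∧ ((p.absden σ).2 ∨ (q.absden σ).2))
    | .star p, σ => (True, (p.absden σ).2)
end

end Abstraction
section Mono

theorem Lang.conc_mono {A : Type} {L L' M M' : Set (Word A)} (h1 : L ⊆ L') (h2 : M ⊆ M') :
    Lang.conc L M ⊆ Lang.conc L' M' := by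
  rintro w ⟨u, hu, v, hv, rfl⟩
  exact ⟨u, h1 hu, v, h2 hv, rfl⟩

theorem PairLang.conc_mono {A : Type} {L L' M M' : Set (Word A × Word A)}
    (h1 : L ⊆ L') (h2 : M ⊆ M') : PairLang.conc L M ⊆ PairLang.conc L' M' := by
  rintro r ⟨p, hp, q, hq, rfl⟩
  exact ⟨p, h1 hp, q, h2 hq, rfl⟩

theorem PairLang.star_mono {A : Type} {L L' : Set (Word A × Word A)} (h : L ⊆ L') :
    PairLang.star L ⊆ PairLang.star L' := by
  rintro r ⟨l, hl, rfl⟩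
  exact ⟨l, fun p hp => h (hl p hp), rfl⟩

theorem PairLang.omegaPow_mono {A : Type} {L L' : Set (Word A × Word A)} (h : L ⊆ L') :
    PairLang.omegaPow L ⊆ PairLang.omegaPow L' := by
  rintro w ⟨f, hf, rfl⟩
  exact ⟨f, fun i => h (hf i), rfl⟩

theorem PairLang.prod_mono {A : Type} {L L' M M' : Set (Word A)} (h1 : L ⊆ L') (h2 : M ⊆ M') :
    PairLang.prod L M ⊆ PairLang.prod L' M' := fun r hr => ⟨h1 hr.1, h2 hr.2⟩

theorem update_pointwise_le {γ : Type*} [Preorder γ] {ρ ρ' : ℕ → γ} (h : ∀ y, ρ y ≤ ρ' y)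
    (x : ℕ) (v : γ) : ∀ y, Function.update ρ x v y ≤ Function.update ρ' x v y := by
  intro y
  rcases eq_or_ne y x with rfl | hy
  · simp
  · simp [Function.update_of_ne hy]
    exact h y

mutual
  theorem TS.den_mono {A : Type} : ∀ (s : TS A) (ρ ρ' : ℕ → Set (Word A)),
      (∀ x, ρ x ⊆ ρ' x) → s.den ρ ⊆ s.den ρ'
    | .letter a, _, _, _ => le_rfl
    | .eps, _, _, _ => le_rfl
    | .var x, _, _, h => h x
    | .add s t, ρ, ρ', h => by
        simp only [TS.den]
        exact Set.union_subset_union (TS.den_mono s ρ ρ' h) (TS.den_mono t ρ ρ' h)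
    | .mul s t, ρ, ρ', h => by
        simp only [TS.den]
        exact Lang.conc_mono (TS.den_mono s ρ ρ' h) (TS.den_mono t ρ ρ' h)
    | .mu x s, ρ, ρ', h => by
        simp only [TS.den]
        apply sInf_le_sInf
        intro L hL
        exact le_trans (TS.den_mono s _ _ (update_pointwise_le h x L)) hL
    | .omega p, ρ, ρ', h => by
        simp only [TS.den]
        exact PairLang.omegaPow_mono (PS.den_mono p ρ ρ' h)

  theorem PS.den_mono {A : Type} : ∀ (p : PS A) (ρ ρ' : ℕ → Set (Word A)),
      (∀ x, ρ x ⊆ ρ' x) → p.den ρ ⊆ p.den ρ'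
    | .pair s t, ρ, ρ', h => by
        simp only [PS.den]
        exact PairLang.prod_mono (TS.den_mono s ρ ρ' h) (TS.den_mono t ρ ρ' h)
    | .add p q, ρ, ρ', h => by
        simp only [PS.den]
        exact Set.union_subset_union (PS.den_mono p ρ ρ' h) (PS.den_mono q ρ ρ' h)
    | .mul p q, ρ, ρ', h => by
        simp only [PS.den]
        exact PairLang.conc_mono (PS.den_mono p ρ ρ' h) (PS.den_mono q ρ ρ' h)
    | .star p, ρ, ρ', h => by
        simp only [PS.den]
        exact PairLang.star_mono (PS.den_mono p ρ ρ' h)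
end

mutual
  theorem TS.absden_mono {A : Type} : ∀ (s : TS A) (σ σ' : ℕ → Prop × Prop),
      (∀ x, σ x ≤ σ' x) → s.absden σ ≤ s.absden σ'
    | .letter a, _, _, _ => le_rfl
    | .eps, _, _, _ => le_rfl
    | .var x, _, _, h => h x
    | .add s t, σ, σ', h => by
        simp only [TS.absden]
        exact sup_le_sup (TS.absden_mono s σ σ' h) (TS.absden_mono t σ σ' h)
    | .mul s t, σ, σ', h => by
        simp only [TS.absden]
        have h1 := TS.absden_mono s σ σ' h
        have h2 := TS.absden_mono t σ σ' h
        exact ⟨fun hp => ⟨h1.1 hp.1, h2.1 hp.2⟩,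
          fun hp => ⟨h1.1 hp.1, h2.1 hp.2.1, hp.2.2.elim (fun a => Or.inl (h1.2 a)) (fun a => Or.inr (h2.2 a))⟩⟩
    | .mu x s, σ, σ', h => by
        simp only [TS.absden]
        apply sInf_le_sInf
        intro b hb
        exact le_trans (TS.absden_mono s _ _ (update_pointwise_le h x b)) hb
    | .omega p, σ, σ', h => by
        simp only [TS.absden]
        have h1 := PS.absden_mono p σ σ' h
        exact ⟨h1.1, fun hp => ⟨h1.1 hp.1, h1.2 hp.2⟩⟩

  theorem PS.absden_mono {A : Type} : ∀ (p : PS A) (σ σ' : ℕ → Prop × Prop),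
      (∀ x, σ x ≤ σ' x) → p.absden σ ≤ p.absden σ'
    | .pair s t, σ, σ', h => by
        simp only [PS.absden]
        have h1 := TS.absden_mono s σ σ' h
        have h2 := TS.absden_mono t σ σ' h
        exact ⟨fun hp => ⟨h1.1 hp.1, h2.1 hp.2⟩,
          fun hp => ⟨h1.1 hp.1, h2.1 hp.2.1, hp.2.2.elim (fun a => Or.inl (h1.2 a)) (fun a => Or.inr (h2.2 a))⟩⟩
    | .add p q, σ, σ', h => by
        simp only [PS.absden]
        exact sup_le_sup (PS.absden_mono p σ σ' h) (PS.absden_mono q σ σ' h)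
    | .mul p q, σ, σ', h => by
        simp only [PS.absden]
        have h1 := PS.absden_mono p σ σ' h
        have h2 := PS.absden_mono q σ σ' h
        exact ⟨fun hp => ⟨h1.1 hp.1, h2.1 hp.2⟩,
          fun hp => ⟨h1.1 hp.1, h2.1 hp.2.1, hp.2.2.elim (fun a => Or.inl (h1.2 a)) (fun a => Or.inr (h2.2 a))⟩⟩
    | .star p, σ, σ', h => by
        simp only [PS.absden]
        have h1 := PS.absden_mono p σ σ' h
        exact ⟨fun _ => trivial, h1.2⟩
end

end Mono
section OpChar

variable {A : Type}

theorem prop_eq_iff {p q : Prop} (h : p ↔ q) : p = q := propext h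

theorem aW_union (L M : Set (Word A)) : aW (L ∪ M) = aW L ⊔ aW M := by
  apply Prod.ext
  · simp only [aW, Prod.fst_sup, sup_Prop_eq]
    exact prop_eq_iff Set.union_nonempty
  · simp only [aW, Prod.snd_sup, sup_Prop_eq]
    apply prop_eq_iff
    constructor
    · rintro ⟨w, hw | hw, hne⟩
      · exact Or.inl ⟨w, hw, hne⟩
      · exact Or.inr ⟨w, hw, hne⟩
    · rintro (⟨w, hw, hne⟩ | ⟨w, hw, hne⟩)
      · exact ⟨w, Or.inl hw, hne⟩
      · exact ⟨w, Or.inr hw, hne⟩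

theorem aP_union (L M : Set (Word A × Word A)) : aP (L ∪ M) = aP L ⊔ aP M := by
  apply Prod.ext
  · simp only [aP, Prod.fst_sup, sup_Prop_eq]
    exact prop_eq_iff Set.union_nonempty
  · simp only [aP, Prod.snd_sup, sup_Prop_eq]
    apply prop_eq_iff
    constructor
    · rintro ⟨w, hw | hw, hne⟩
      · exact Or.inl ⟨w, hw, hne⟩
      · exact Or.inr ⟨w, hw, hne⟩
    · rintro (⟨w, hw, hne⟩ | ⟨w, hw, hne⟩)
      · exact ⟨w, Or.inl hw, hne⟩
      · exact ⟨w, Or.inr hw, hne⟩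

theorem aW_conc (L M : Set (Word A)) :
    aW (Lang.conc L M) = ((aW L).1 ∧ (aW M).1, (aW L).1 ∧ (aW M).1 ∧ ((aW L).2 ∨ (aW M).2)) := by
  apply Prod.ext <;> apply prop_eq_iff
  · constructor
    · rintro ⟨w, u, hu, v, hv, rfl⟩
      exact ⟨⟨u, hu⟩, ⟨v, hv⟩⟩
    · rintro ⟨⟨u, hu⟩, ⟨v, hv⟩⟩
      exact ⟨_, u, hu, v, hv, rfl⟩
  · constructor
    · rintro ⟨w, ⟨u, hu, v, hv, rfl⟩, hne⟩
      refine ⟨⟨u, hu⟩, ⟨v, hv⟩, ?_⟩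
      by_contra hc
      push_neg at hc
      obtain ⟨h1, h2⟩ := hc
      have hu' : u = Word.eps A := by
        by_contra h'; exact h1 ⟨u, hu, h'⟩
      have hv' : v = Word.eps A := by
        by_contra h'; exact h2 ⟨v, hv, h'⟩
      exact hne ((append_eq_eps_iff u v).2 ⟨hu', hv'⟩)
    · rintro ⟨⟨u0, hu0⟩, ⟨v0, hv0⟩, (⟨u, hu, hne⟩ | ⟨v, hv, hne⟩)⟩
      · refine ⟨_, ⟨u, hu, v0, hv0, rfl⟩, ?_⟩
        intro h
        exact hne ((append_eq_eps_iff u v0).1 h).1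
      · refine ⟨_, ⟨u0, hu0, v, hv, rfl⟩, ?_⟩
        intro h
        exact hne ((append_eq_eps_iff u0 v).1 h).2

theorem aW_omegaPow (P : Set (Word A × Word A)) :
    aW (PairLang.omegaPow P) = ((aP P).1, (aP P).1 ∧ (aP P).2) := by
  apply Prod.ext <;> apply prop_eq_iff
  · constructor
    · rintro ⟨w, f, hf, rfl⟩
      exact ⟨f 0, hf 0⟩
    · rintro ⟨r, hr⟩
      exact ⟨_, fun _ => r, fun _ => hr, rfl⟩
  · constructor
    · rintro ⟨w, ⟨f, hf, rfl⟩, hne⟩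
      refine ⟨⟨f 0, hf 0⟩, ?_⟩
      rw [Ne, omegaWord_eq_eps_iff] at hne
      push_neg at hne
      obtain ⟨n, hn⟩ := hne
      rcases Classical.em ((f n).1 = Word.eps A) with h1 | h1
      · exact ⟨f n, hf n, Or.inr (hn h1)⟩
      · exact ⟨f n, hf n, Or.inl h1⟩
    · rintro ⟨-, r, hr, hne⟩
      refine ⟨_, ⟨fun _ => r, fun _ => hr, rfl⟩, ?_⟩
      rw [Ne, omegaWord_eq_eps_iff]
      intro h
      rcases hne with hne | hne
      · exact hne (h 0).1
      · exact hne (h 0).2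

theorem aP_prod (L M : Set (Word A)) :
    aP (PairLang.prod L M) = ((aW L).1 ∧ (aW M).1, (aW L).1 ∧ (aW M).1 ∧ ((aW L).2 ∨ (aW M).2)) := by
  apply Prod.ext <;> apply prop_eq_iff
  · constructor
    · rintro ⟨⟨u, v⟩, hu, hv⟩
      exact ⟨⟨u, hu⟩, ⟨v, hv⟩⟩
    · rintro ⟨⟨u, hu⟩, ⟨v, hv⟩⟩
      exact ⟨(u, v), hu, hv⟩
  · constructor
    · rintro ⟨⟨u, v⟩, ⟨hu, hv⟩, hne⟩
      refine ⟨⟨u, hu⟩, ⟨v, hv⟩, ?_⟩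
      rcases hne with hne | hne
      · exact Or.inl ⟨u, hu, hne⟩
      · exact Or.inr ⟨v, hv, hne⟩
    · rintro ⟨⟨u0, hu0⟩, ⟨v0, hv0⟩, (⟨u, hu, hne⟩ | ⟨v, hv, hne⟩)⟩
      · exact ⟨(u, v0), ⟨hu, hv0⟩, Or.inl hne⟩
      · exact ⟨(u0, v), ⟨hu0, hv⟩, Or.inr hne⟩

theorem pairMul_fst (p q : Word A × Word A) :
    (PairLang.pairMul p q).1 = Word.append p.1 q.1 := rfl

theorem pairMul_snd (p q : Word A × Word A) :
    (PairLang.pairMul p q).2 = Word.append q.2 p.2 := rfl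

theorem aP_conc (L M : Set (Word A × Word A)) :
    aP (PairLang.conc L M) = ((aP L).1 ∧ (aP M).1, (aP L).1 ∧ (aP M).1 ∧ ((aP L).2 ∨ (aP M).2)) := by
  apply Prod.ext <;> apply prop_eq_iff
  · constructor
    · rintro ⟨r, p, hp, q, hq, rfl⟩
      exact ⟨⟨p, hp⟩, ⟨q, hq⟩⟩
    · rintro ⟨⟨p, hp⟩, ⟨q, hq⟩⟩
      exact ⟨_, p, hp, q, hq, rfl⟩
  · constructor
    · rintro ⟨r, ⟨p, hp, q, hq, rfl⟩, hne⟩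
      refine ⟨⟨p, hp⟩, ⟨q, hq⟩, ?_⟩
      rcases hne with hne | hne
      · rw [pairMul_fst, Ne, append_eq_eps_iff] at hne
        push_neg at hne
        rcases Classical.em (p.1 = Word.eps A) with h1 | h1
        · exact Or.inr ⟨q, hq, Or.inl (hne h1)⟩
        · exact Or.inl ⟨p, hp, Or.inl h1⟩
      · rw [pairMul_snd, Ne, append_eq_eps_iff] at hne
        push_neg at hne
        rcases Classical.em (q.2 = Word.eps A) with h1 | h1
        · exact Or.inl ⟨p, hp, Or.inr (hne h1)⟩
        · exact Or.inr ⟨q, hq, Or.inr h1⟩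
    · rintro ⟨⟨p0, hp0⟩, ⟨q0, hq0⟩, (⟨p, hp, hne⟩ | ⟨q, hq, hne⟩)⟩
      · refine ⟨_, ⟨p, hp, q0, hq0, rfl⟩, ?_⟩
        rcases hne with hne | hne
        · exact Or.inl (fun h => hne ((append_eq_eps_iff _ _).1 h).1)
        · exact Or.inr (fun h => hne ((append_eq_eps_iff _ _).1 h).2)
      · refine ⟨_, ⟨p0, hp0, q, hq, rfl⟩, ?_⟩
        rcases hne with hne | hne
        · exact Or.inl (fun h => hne ((append_eq_eps_iff _ _).1 h).2)
        · exact Or.inr (fun h => hne ((append_eq_eps_iff _ _).1 h).1)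

theorem foldr_comp_ne {l : List (Word A × Word A)}
    (h : (l.foldr PairLang.pairMul (Word.eps A, Word.eps A)).1 ≠ Word.eps A ∨
         (l.foldr PairLang.pairMul (Word.eps A, Word.eps A)).2 ≠ Word.eps A) :
    ∃ p ∈ l, p.1 ≠ Word.eps A ∨ p.2 ≠ Word.eps A := by
  induction l with
  | nil =>
    simp only [List.foldr_nil] at h
    rcases h with h | h <;> exact absurd rfl h
  | cons a l ih =>
    simp only [List.foldr_cons] at h
    rcases h with h | h
    · rw [pairMul_fst, Ne, append_eq_eps_iff] at h
      push_neg at h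
      rcases Classical.em (a.1 = Word.eps A) with h1 | h1
      · obtain ⟨p, hp, hc⟩ := ih (Or.inl (h h1))
        exact ⟨p, List.mem_cons_of_mem _ hp, hc⟩
      · exact ⟨a, List.mem_cons_self, Or.inl h1⟩
    · rw [pairMul_snd, Ne, append_eq_eps_iff] at h
      push_neg at h
      rcases Classical.em (a.2 = Word.eps A) with h1 | h1
      · obtain ⟨p, hp, hc⟩ := ih (Or.inr (fun hh => h hh h1))
        exact ⟨p, List.mem_cons_of_mem _ hp, hc⟩
      · exact ⟨a, List.mem_cons_self, Or.inr h1⟩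

theorem aP_star (L : Set (Word A × Word A)) :
    aP (PairLang.star L) = (True, (aP L).2) := by
  apply Prod.ext <;> apply prop_eq_iff
  · simp only [iff_true]
    exact ⟨_, [], by simp, rfl⟩
  · constructor
    · rintro ⟨r, ⟨l, hl, rfl⟩, hne⟩
      obtain ⟨p, hp, hc⟩ := foldr_comp_ne hne
      exact ⟨p, hl p hp, hc⟩
    · rintro ⟨p, hp, hne⟩
      refine ⟨_, ⟨[p], by simpa using hp, rfl⟩, ?_⟩
      simp only [List.foldr_cons, List.foldr_nil]
      rcases hne with hne | hne
      · exact Or.inl (fun h => hne ((append_eq_eps_iff _ _).1 h).1)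
      · exact Or.inr (fun h => hne ((append_eq_eps_iff _ _).1 h).2)

end OpChar
section AbsSpec

theorem update_value_le {γ : Type*} [Preorder γ] (ρ : ℕ → γ) (x : ℕ) {v v' : γ} (h : v ≤ v') :
    ∀ y, Function.update ρ x v y ≤ Function.update ρ x v' y := by
  intro y
  rcases eq_or_ne y x with rfl | hy
  · simpa using h
  · simp [Function.update_of_ne hy]

theorem update_comp {α β : Type*} (f : α → β) (g : ℕ → α) (x : ℕ) (v : α) :
    (fun y => f (Function.update g x v y)) = Function.update (fun y => f (g y)) x (f v) := by
  funext y
  rcases eq_or_ne y x with rfl | hy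
  · simp
  · simp [Function.update_of_ne hy]

mutual
  theorem TS.abs_spec {A : Type} : ∀ (s : TS A) (ρ : ℕ → Set (Word A)),
      aW (s.den ρ) = s.absden (fun x => aW (ρ x))
    | .letter a, ρ => by
        simp only [TS.den, TS.absden]
        apply Prod.ext <;> apply prop_eq_iff <;> simp [aW]
        exact letter_ne_eps a
    | .eps, ρ => by
        simp only [TS.den, TS.absden]
        apply Prod.ext <;> apply prop_eq_iff <;> simp [aW]
    | .var x, ρ => rfl
    | .add s t, ρ => by
        simp only [TS.den, TS.absden]
        rw [aW_union, TS.abs_spec s ρ, TS.abs_spec t ρ]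
    | .mul s t, ρ => by
        simp only [TS.den, TS.absden]
        rw [aW_conc, TS.abs_spec s ρ, TS.abs_spec t ρ]
    | .mu x s, ρ => by
        simp only [TS.den, TS.absden]
        refine lfp_transfer aW gW aW_gc ?_ ?_ ?_
        · exact fun L L' h => TS.den_mono s _ _ (update_value_le ρ x h)
        · exact fun b b' h => TS.absden_mono s _ _ (update_value_le _ x h)
        · intro L
          rw [TS.abs_spec s (Function.update ρ x L), update_comp]
    | .omega p, ρ => by
        simp only [TS.den, TS.absden]
        rw [aW_omegaPow, PS.abs_spec p ρ]

  theorem PS.abs_spec {A : Type} : ∀ (p : PS A) (ρ : ℕ → Set (Word A)),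
      aP (p.den ρ) = p.absden (fun x => aW (ρ x))
    | .pair s t, ρ => by
        simp only [PS.den, PS.absden]
        rw [aP_prod, TS.abs_spec s ρ, TS.abs_spec t ρ]
    | .add p q, ρ => by
        simp only [PS.den, PS.absden]
        rw [aP_union, PS.abs_spec p ρ, PS.abs_spec q ρ]
    | .mul p q, ρ => by
        simp only [PS.den, PS.absden]
        rw [aP_conc, PS.abs_spec p ρ, PS.abs_spec q ρ]
    | .star p, ρ => by
        simp only [PS.den, PS.absden]
        rw [aP_star, PS.abs_spec p ρ]
end

end AbsSpec
section Bad

theorem TS.mem_subT_self {A : Type} (s : TS A) : s ∈ s.subT := by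
  cases s <;> simp [TS.subT]

theorem PS.mem_subP_self {A : Type} (p : PS A) : p ∈ p.subP := by
  cases p <;> simp [PS.subP]

theorem aW_den {A : Type} (s : TS A) (ρ : ℕ → Set (Word A))
    (hE : ∀ x, aW (ρ x) = (True, True)) :
    aW (s.den ρ) = s.absden (fun _ => (True, True)) := by
  rw [TS.abs_spec]
  congr 1
  funext x
  exact hE x

theorem aP_den {A : Type} (p : PS A) (ρ : ℕ → Set (Word A))
    (hE : ∀ x, aW (ρ x) = (True, True)) :
    aP (p.den ρ) = p.absden (fun _ => (True, True)) := by
  rw [PS.abs_spec]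
  congr 1
  funext x
  exact hE x

theorem den_nonempty {A : Type} {s : TS A} {ρ : ℕ → Set (Word A)}
    (hE : ∀ x, aW (ρ x) = (True, True))
    (h : (s.absden (fun _ : ℕ => ((True : Prop), (True : Prop)))).1) :
    (s.den ρ).Nonempty := by
  have := congrArg Prod.fst (aW_den s ρ hE)
  rw [show (aW (s.den ρ)).1 = (s.den ρ).Nonempty from rfl] at this
  rw [this]
  exact h

theorem den_has_ne_eps {A : Type} {s : TS A} {ρ : ℕ → Set (Word A)}
    (hE : ∀ x, aW (ρ x) = (True, True))
    (h : (s.absden (fun _ : ℕ => ((True : Prop), (True : Prop)))).2) :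
    ∃ w ∈ s.den ρ, w ≠ Word.eps A := by
  have := congrArg Prod.snd (aW_den s ρ hE)
  rw [show (aW (s.den ρ)).2 = (∃ w ∈ s.den ρ, w ≠ Word.eps A) from rfl] at this
  rw [this]
  exact h

theorem pden_nonempty {A : Type} {p : PS A} {ρ : ℕ → Set (Word A)}
    (hE : ∀ x, aW (ρ x) = (True, True))
    (h : (p.absden (fun _ : ℕ => ((True : Prop), (True : Prop)))).1) :
    (p.den ρ).Nonempty := by
  have := congrArg Prod.fst (aP_den p ρ hE)
  rw [show (aP (p.den ρ)).1 = (p.den ρ).Nonempty from rfl] at this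
  rw [this]
  exact h

mutual
  theorem TS.bad {A : Type} : ∀ (t : TS A) (ρ : ℕ → Set (Word A)),
      (∀ x, aW (ρ x) = (True, True)) →
      (∀ s ∈ t.subT, (s.absden (fun _ : ℕ => ((True : Prop), (True : Prop)))).1 ∧
        (s ≠ TS.eps → (s.absden (fun _ : ℕ => ((True : Prop), (True : Prop)))).2)) →
      (∀ q ∈ t.subP, (q.absden (fun _ : ℕ => ((True : Prop), (True : Prop)))).1) →
      (∃ t₁ t₂ : TS A, PS.pair t₁ t₂ ∈ t.subP ∧ t₂ ≠ TS.eps) →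
      ∃ w ∈ t.den ρ, ¬ w.IsWellOrdered
    | .letter a, ρ, hE, hT, hP, ⟨t₁, t₂, hmem, hne⟩ => by
        simp [TS.subP] at hmem
    | .eps, ρ, hE, hT, hP, ⟨t₁, t₂, hmem, hne⟩ => by
        simp [TS.subP] at hmem
    | .var x, ρ, hE, hT, hP, ⟨t₁, t₂, hmem, hne⟩ => by
        simp [TS.subP] at hmem
    | .add s t, ρ, hE, hT, hP, ⟨t₁, t₂, hmem, hne⟩ => by
        simp only [TS.subP, Set.mem_union] at hmem
        rcases hmem with hmem | hmem
        · obtain ⟨w, hw, hbad⟩ := TS.bad s ρ hE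
            (fun s' hs' => hT s' (Set.mem_insert_of_mem _ (Set.mem_union_left _ hs')))
            (fun q hq => hP q (Set.mem_union_left _ hq)) ⟨t₁, t₂, hmem, hne⟩
          exact ⟨w, Set.mem_union_left _ hw, hbad⟩
        · obtain ⟨w, hw, hbad⟩ := TS.bad t ρ hE
            (fun s' hs' => hT s' (Set.mem_insert_of_mem _ (Set.mem_union_right _ hs')))
            (fun q hq => hP q (Set.mem_union_right _ hq)) ⟨t₁, t₂, hmem, hne⟩
          exact ⟨w, Set.mem_union_right _ hw, hbad⟩
    | .mul s t, ρ, hE, hT, hP, ⟨t₁, t₂, hmem, hne⟩ => by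
        simp only [TS.subP, Set.mem_union] at hmem
        rcases hmem with hmem | hmem
        · obtain ⟨w, hw, hbad⟩ := TS.bad s ρ hE
            (fun s' hs' => hT s' (Set.mem_insert_of_mem _ (Set.mem_union_left _ hs')))
            (fun q hq => hP q (Set.mem_union_left _ hq)) ⟨t₁, t₂, hmem, hne⟩
          obtain ⟨v, hv⟩ := den_nonempty hE
            (hT t (Set.mem_insert_of_mem _ (Set.mem_union_right _ (TS.mem_subT_self t)))).1
          exact ⟨Word.append w v, ⟨w, hw, v, hv, rfl⟩, append_not_wellOrdered_left v hbad⟩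
        · obtain ⟨w, hw, hbad⟩ := TS.bad t ρ hE
            (fun s' hs' => hT s' (Set.mem_insert_of_mem _ (Set.mem_union_right _ hs')))
            (fun q hq => hP q (Set.mem_union_right _ hq)) ⟨t₁, t₂, hmem, hne⟩
          obtain ⟨u, hu⟩ := den_nonempty hE
            (hT s (Set.mem_insert_of_mem _ (Set.mem_union_left _ (TS.mem_subT_self s)))).1
          exact ⟨Word.append u w, ⟨u, hu, w, hw, rfl⟩, append_not_wellOrdered_right u hbad⟩
    | .mu x s, ρ, hE, hT, hP, ⟨t₁, t₂, hmem, hne⟩ => by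
        simp only [TS.subP] at hmem
        have hself := hT (TS.mu x s) (TS.mem_subT_self _)
        have hmu : ((TS.mu x s).absden (fun _ : ℕ => ((True : Prop), (True : Prop)))) =
            (True, True) := by
          apply Prod.ext
          · exact prop_eq_iff (iff_true_intro hself.1)
          · exact prop_eq_iff (iff_true_intro (hself.2 (by intro h; cases h)))
        set L₀ : Set (Word A) := sInf {L | s.den (Function.update ρ x L) ⊆ L} with hL₀
        have hαL₀ : aW L₀ = (True, True) := by
          have : aW ((TS.mu x s).den ρ) = (True, True) := by
            rw [aW_den _ _ hE, hmu]
          simpa only [TS.den] using this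
        have hE' : ∀ y, aW (Function.update ρ x L₀ y) = (True, True) := by
          intro y
          rcases eq_or_ne y x with rfl | hy
          · simpa using hαL₀
          · rw [Function.update_of_ne hy]; exact hE y
        obtain ⟨w, hw, hbad⟩ := TS.bad s (Function.update ρ x L₀) hE'
          (fun s' hs' => hT s' (Set.mem_insert_of_mem _ hs'))
          (fun q hq => hP q hq) ⟨t₁, t₂, hmem, hne⟩
        have hpre : s.den (Function.update ρ x L₀) ⊆ L₀ :=
          lfp_prefixed (F := fun L => s.den (Function.update ρ x L))
            (fun L L' h => TS.den_mono s _ _ (update_value_le ρ x h))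
        refine ⟨w, ?_, hbad⟩
        simp only [TS.den]
        exact hpre hw
    | .omega p, ρ, hE, hT, hP, ⟨t₁, t₂, hmem, hne⟩ => by
        simp only [TS.subP, Set.mem_insert_iff] at hmem
        have hmem' : PS.pair t₁ t₂ ∈ p.subP := by
          rcases hmem with hmem | hmem
          · rw [← hmem]; exact PS.mem_subP_self _
          · exact hmem
        obtain ⟨r, hr, hbad⟩ := PS.bad p ρ hE
          (fun s' hs' => hT s' (Set.mem_insert_of_mem _ hs'))
          (fun q hq => hP q (Set.mem_insert_of_mem _ hq)) ⟨t₁, t₂, hmem', hne⟩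
        refine ⟨PairLang.omegaWord (fun _ => r), ⟨fun _ => r, fun _ => hr, rfl⟩, ?_⟩
        rcases hbad with hb | hb | hb
        · exact omegaWord_not_wellOrdered_of_snd_ne_eps _ (fun _ => hb)
        · exact omegaWord_not_wellOrdered_of_comp _ 0 (Or.inl hb)
        · exact omegaWord_not_wellOrdered_of_comp _ 0 (Or.inr hb)

  theorem PS.bad {A : Type} : ∀ (p : PS A) (ρ : ℕ → Set (Word A)),
      (∀ x, aW (ρ x) = (True, True)) →
      (∀ s ∈ p.subT, (s.absden (fun _ : ℕ => ((True : Prop), (True : Prop)))).1 ∧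
        (s ≠ TS.eps → (s.absden (fun _ : ℕ => ((True : Prop), (True : Prop)))).2)) →
      (∀ q ∈ p.subP, (q.absden (fun _ : ℕ => ((True : Prop), (True : Prop)))).1) →
      (∃ t₁ t₂ : TS A, PS.pair t₁ t₂ ∈ p.subP ∧ t₂ ≠ TS.eps) →
      ∃ r ∈ p.den ρ, r.2 ≠ Word.eps A ∨ ¬ r.1.IsWellOrdered ∨ ¬ r.2.IsWellOrdered
    | .pair s t, ρ, hE, hT, hP, ⟨t₁, t₂, hmem, hne⟩ => by
        simp only [PS.subP, Set.mem_insert_iff, Set.mem_union] at hmem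
        rcases hmem with hmem | hmem | hmem
        · -- the pair is (s, t) itself, so t = t₂ ≠ eps
          have ht2 : t = t₂ := by injection hmem.symm
          obtain ⟨u, hu⟩ := den_nonempty hE
            (hT s (Set.mem_union_left _ (TS.mem_subT_self s))).1
          obtain ⟨v, hv, hvne⟩ := den_has_ne_eps hE
            ((hT t (Set.mem_union_right _ (TS.mem_subT_self t))).2 (by rw [ht2]; exact hne))
          exact ⟨(u, v), ⟨hu, hv⟩, Or.inl hvne⟩
        · obtain ⟨w, hw, hbad⟩ := TS.bad s ρ hE
            (fun s' hs' => hT s' (Set.mem_union_left _ hs'))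
            (fun q hq => hP q (Set.mem_insert_of_mem _ (Set.mem_union_left _ hq)))
            ⟨t₁, t₂, hmem, hne⟩
          obtain ⟨v, hv⟩ := den_nonempty hE
            (hT t (Set.mem_union_right _ (TS.mem_subT_self t))).1
          exact ⟨(w, v), ⟨hw, hv⟩, Or.inr (Or.inl hbad)⟩
        · obtain ⟨w, hw, hbad⟩ := TS.bad t ρ hE
            (fun s' hs' => hT s' (Set.mem_union_right _ hs'))
            (fun q hq => hP q (Set.mem_insert_of_mem _ (Set.mem_union_right _ hq)))
            ⟨t₁, t₂, hmem, hne⟩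
          obtain ⟨u, hu⟩ := den_nonempty hE
            (hT s (Set.mem_union_left _ (TS.mem_subT_self s))).1
          exact ⟨(u, w), ⟨hu, hw⟩, Or.inr (Or.inr hbad)⟩
    | .add p q, ρ, hE, hT, hP, ⟨t₁, t₂, hmem, hne⟩ => by
        simp only [PS.subP, Set.mem_insert_iff, Set.mem_union] at hmem
        rcases hmem with hmem | hmem | hmem
        · exact absurd hmem (by intro h; cases h)
        · obtain ⟨r, hr, hbad⟩ := PS.bad p ρ hE
            (fun s' hs' => hT s' (Set.mem_union_left _ hs'))
            (fun q' hq' => hP q' (Set.mem_insert_of_mem _ (Set.mem_union_left _ hq')))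
            ⟨t₁, t₂, hmem, hne⟩
          exact ⟨r, Set.mem_union_left _ hr, hbad⟩
        · obtain ⟨r, hr, hbad⟩ := PS.bad q ρ hE
            (fun s' hs' => hT s' (Set.mem_union_right _ hs'))
            (fun q' hq' => hP q' (Set.mem_insert_of_mem _ (Set.mem_union_right _ hq')))
            ⟨t₁, t₂, hmem, hne⟩
          exact ⟨r, Set.mem_union_right _ hr, hbad⟩
    | .mul p q, ρ, hE, hT, hP, ⟨t₁, t₂, hmem, hne⟩ => by
        simp only [PS.subP, Set.mem_insert_iff, Set.mem_union] at hmem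
        rcases hmem with hmem | hmem | hmem
        · exact absurd hmem (by intro h; cases h)
        · obtain ⟨r, hr, hbad⟩ := PS.bad p ρ hE
            (fun s' hs' => hT s' (Set.mem_union_left _ hs'))
            (fun q' hq' => hP q' (Set.mem_insert_of_mem _ (Set.mem_union_left _ hq')))
            ⟨t₁, t₂, hmem, hne⟩
          obtain ⟨r', hr'⟩ := pden_nonempty hE
            (hP q (Set.mem_insert_of_mem _ (Set.mem_union_right _ (PS.mem_subP_self q))))
          refine ⟨PairLang.pairMul r r', ⟨r, hr, r', hr', rfl⟩, ?_⟩
          rcases hbad with hb | hb | hb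
          · exact Or.inl (fun h => hb ((append_eq_eps_iff _ _).1 h).2)
          · exact Or.inr (Or.inl (append_not_wellOrdered_left _ hb))
          · exact Or.inr (Or.inr (append_not_wellOrdered_right _ hb))
        · obtain ⟨r, hr, hbad⟩ := PS.bad q ρ hE
            (fun s' hs' => hT s' (Set.mem_union_right _ hs'))
            (fun q' hq' => hP q' (Set.mem_insert_of_mem _ (Set.mem_union_right _ hq')))
            ⟨t₁, t₂, hmem, hne⟩
          obtain ⟨r', hr'⟩ := pden_nonempty hE
            (hP p (Set.mem_insert_of_mem _ (Set.mem_union_left _ (PS.mem_subP_self p))))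
          refine ⟨PairLang.pairMul r' r, ⟨r', hr', r, hr, rfl⟩, ?_⟩
          rcases hbad with hb | hb | hb
          · exact Or.inl (fun h => hb ((append_eq_eps_iff _ _).1 h).1)
          · exact Or.inr (Or.inl (append_not_wellOrdered_right _ hb))
          · exact Or.inr (Or.inr (append_not_wellOrdered_left _ hb))
    | .star p, ρ, hE, hT, hP, ⟨t₁, t₂, hmem, hne⟩ => by
        simp only [PS.subP, Set.mem_insert_iff] at hmem
        have hmem' : PS.pair t₁ t₂ ∈ p.subP := by
          rcases hmem with hmem | hmem
          · exact absurd hmem (by intro h; cases h)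
          · exact hmem
        obtain ⟨r, hr, hbad⟩ := PS.bad p ρ hE
          (fun s' hs' => hT s' hs')
          (fun q' hq' => hP q' (Set.mem_insert_of_mem _ hq'))
          ⟨t₁, t₂, hmem', hne⟩
        refine ⟨PairLang.pairMul r (Word.eps A, Word.eps A),
          ⟨[r], by simpa using hr, rfl⟩, ?_⟩
        rcases hbad with hb | hb | hb
        · exact Or.inl (fun h => hb ((append_eq_eps_iff _ _).1 h).2)
        · exact Or.inr (Or.inl (append_not_wellOrdered_left _ hb))
        · exact Or.inr (Or.inr (append_not_wellOrdered_right _ hb))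
end

end Bad
section MapLemmas

mutual
  theorem TS.subT_map {A B : Type} : ∀ (t : TS A) (g : A → B),
      (t.map g).subT = TS.map g '' t.subT
    | .letter a, g => by simp [TS.map, TS.subT]
    | .eps, g => by simp [TS.map, TS.subT]
    | .var x, g => by simp [TS.map, TS.subT]
    | .add s t, g => by
        simp [TS.map, TS.subT, TS.subT_map s g, TS.subT_map t g,
          Set.image_insert_eq, Set.image_union]
    | .mul s t, g => by
        simp [TS.map, TS.subT, TS.subT_map s g, TS.subT_map t g,
          Set.image_insert_eq, Set.image_union]
    | .mu x s, g => by
        simp [TS.map, TS.subT, TS.subT_map s g, Set.image_insert_eq]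
    | .omega p, g => by
        simp [TS.map, TS.subT, PS.subT_map p g, Set.image_insert_eq]

  theorem PS.subT_map {A B : Type} : ∀ (p : PS A) (g : A → B),
      (p.map g).subT = TS.map g '' p.subT
    | .pair s t, g => by
        simp [PS.map, PS.subT, TS.subT_map s g, TS.subT_map t g, Set.image_union]
    | .add p q, g => by
        simp [PS.map, PS.subT, PS.subT_map p g, PS.subT_map q g, Set.image_union]
    | .mul p q, g => by
        simp [PS.map, PS.subT, PS.subT_map p g, PS.subT_map q g, Set.image_union]
    | .star p, g => by
        simp [PS.map, PS.subT, PS.subT_map p g]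
end

mutual
  theorem TS.subP_map {A B : Type} : ∀ (t : TS A) (g : A → B),
      (t.map g).subP = PS.map g '' t.subP
    | .letter a, g => by simp [TS.map, TS.subP]
    | .eps, g => by simp [TS.map, TS.subP]
    | .var x, g => by simp [TS.map, TS.subP]
    | .add s t, g => by
        simp [TS.map, TS.subP, TS.subP_map s g, TS.subP_map t g, Set.image_union]
    | .mul s t, g => by
        simp [TS.map, TS.subP, TS.subP_map s g, TS.subP_map t g, Set.image_union]
    | .mu x s, g => by
        simp [TS.map, TS.subP, TS.subP_map s g]
    | .omega p, g => by
        simp [TS.map, TS.subP, PS.subP_map p g, Set.image_insert_eq]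

  theorem PS.subP_map {A B : Type} : ∀ (p : PS A) (g : A → B),
      (p.map g).subP = PS.map g '' p.subP
    | .pair s t, g => by
        simp [PS.map, PS.subP, TS.subP_map s g, TS.subP_map t g,
          Set.image_insert_eq, Set.image_union]
    | .add p q, g => by
        simp [PS.map, PS.subP, PS.subP_map p g, PS.subP_map q g,
          Set.image_insert_eq, Set.image_union]
    | .mul p q, g => by
        simp [PS.map, PS.subP, PS.subP_map p g, PS.subP_map q g,
          Set.image_insert_eq, Set.image_union]
    | .star p, g => by
        simp [PS.map, PS.subP, PS.subP_map p g, Set.image_insert_eq]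
end

theorem TS.map_eq_eps_iff {A B : Type} (s : TS A) (g : A → B) :
    s.map g = TS.eps ↔ s = TS.eps := by
  cases s <;> simp [TS.map]

theorem exists_ne_eps_of_ne {A : Type} {L : Set (Word A)} (hne : L ≠ ∅)
    (h : L ≠ {Word.eps A}) : ∃ w ∈ L, w ≠ Word.eps A := by
  by_contra hc
  push_neg at hc
  apply h
  apply Set.eq_singleton_iff_nonempty_unique_mem.2
  exact ⟨Set.nonempty_iff_ne_empty.2 hne, hc⟩

end MapLemmas
section FinalAssembly

theorem envL_good (Alph : Type) :
    ∀ x, aW ((fun y => {Word.letter (Sum.inr y : Alph ⊕ ℕ)}) x) = (True, True) := by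
  intro x
  apply Prod.ext
  · exact prop_eq_iff (iff_true_intro ⟨_, rfl⟩)
  · exact prop_eq_iff (iff_true_intro ⟨_, rfl, letter_ne_eps _⟩)

theorem absfact_of_denL {Alph : Type} (s : TS Alph) (h1 : s.denL ≠ ∅)
    (h2 : s ≠ TS.eps → s.denL ≠ {Word.eps (Alph ⊕ ℕ)}) :
    ((s.map (Sum.inl : Alph → Alph ⊕ ℕ)).absden (fun _ : ℕ => ((True : Prop), (True : Prop)))).1 ∧
      (s.map (Sum.inl : Alph → Alph ⊕ ℕ) ≠ TS.eps →
        ((s.map (Sum.inl : Alph → Alph ⊕ ℕ)).absden (fun _ : ℕ => ((True : Prop), (True : Prop)))).2) := by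
  have key := aW_den (s.map (Sum.inl : Alph → Alph ⊕ ℕ)) (fun y => {Word.letter (Sum.inr y : Alph ⊕ ℕ)})
    (envL_good Alph)
  have hden : (s.map (Sum.inl : Alph → Alph ⊕ ℕ)).den (fun y => {Word.letter (Sum.inr y : Alph ⊕ ℕ)}) =
      s.denL := rfl
  rw [hden] at key
  constructor
  · rw [← congrArg Prod.fst key]
    exact Set.nonempty_iff_ne_empty.2 h1
  · intro hne
    rw [← congrArg Prod.snd key]
    exact exists_ne_eps_of_ne h1 (h2 (fun h => hne (by rw [h]; simp [TS.map])))

theorem absfactP_of_denL {Alph : Type} (q : PS Alph) (h1 : q.denL ≠ ∅) :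
    ((q.map (Sum.inl : Alph → Alph ⊕ ℕ)).absden (fun _ : ℕ => ((True : Prop), (True : Prop)))).1 := by
  have key := aP_den (q.map (Sum.inl : Alph → Alph ⊕ ℕ)) (fun y => {Word.letter (Sum.inr y : Alph ⊕ ℕ)})
    (envL_good Alph)
  have hden : (q.map (Sum.inl : Alph → Alph ⊕ ℕ)).den (fun y => {Word.letter (Sum.inr y : Alph ⊕ ℕ)}) =
      q.denL := rfl
  rw [hden] at key
  rw [← congrArg Prod.fst key]
  exact Set.nonempty_iff_ne_empty.2 h1

end FinalAssembly
/-- **Claim A.** Let `t`, `p` be `μωT_s`-expressions of categories `T`, `P` (free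
variables treated as letters) such that no subexpression of `t` or `p` denotes the empty
set and no subexpression of category `T` other than `ε` denotes `{ε}`. If `t` has a
subexpression `t₁ × t₂` with `t₂ ≠ ε`, then `|t|` contains a word that is not
well-ordered; if `p` has a subexpression `t₁ × t₂` with `t₂ ≠ ε`, then `|p|` contains a
pair `(u,v)` with `v ≠ ε` or one of `u`, `v` not well-ordered. -/
theorem claimA (Alph : Type) [Fintype Alph] [Nonempty Alph] (t : TS Alph) (p : PS Alph)
    (htTempty : ∀ s ∈ t.subT, s.denL ≠ ∅) (htPempty : ∀ q ∈ t.subP, q.denL ≠ ∅)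
    (hpTempty : ∀ s ∈ p.subT, s.denL ≠ ∅) (hpPempty : ∀ q ∈ p.subP, q.denL ≠ ∅)
    (htε : ∀ s ∈ t.subT, s ≠ TS.eps → s.denL ≠ {Word.eps (Alph ⊕ ℕ)})
    (hpε : ∀ s ∈ p.subT, s ≠ TS.eps → s.denL ≠ {Word.eps (Alph ⊕ ℕ)}) :
    ((∃ t₁ t₂ : TS Alph, PS.pair t₁ t₂ ∈ t.subP ∧ t₂ ≠ TS.eps) →
      ∃ w ∈ t.denL, ¬ w.IsWellOrdered) ∧
    ((∃ t₁ t₂ : TS Alph, PS.pair t₁ t₂ ∈ p.subP ∧ t₂ ≠ TS.eps) →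
      ∃ r ∈ p.denL, r.2 ≠ Word.eps (Alph ⊕ ℕ) ∨
        ¬ r.1.IsWellOrdered ∨ ¬ r.2.IsWellOrdered) := by
  constructor
  · rintro ⟨t₁, t₂, hmem, hne⟩
    obtain ⟨w, hw, hbad⟩ := TS.bad (t.map Sum.inl)
      (fun y => {Word.letter (Sum.inr y : Alph ⊕ ℕ)}) (envL_good Alph)
      (by
        intro s' hs'
        rw [TS.subT_map] at hs'
        obtain ⟨s, hs, rfl⟩ := hs'
        exact absfact_of_denL s (htTempty s hs) (fun h => htε s hs h))
      (by
        intro q' hq'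
        rw [TS.subP_map] at hq'
        obtain ⟨q, hq, rfl⟩ := hq'
        exact absfactP_of_denL q (htPempty q hq))
      ⟨t₁.map Sum.inl, t₂.map Sum.inl, by
        rw [TS.subP_map]
        exact ⟨PS.pair t₁ t₂, hmem, rfl⟩,
        fun h => hne ((TS.map_eq_eps_iff t₂ Sum.inl).1 h)⟩
    exact ⟨w, hw, hbad⟩
  · rintro ⟨t₁, t₂, hmem, hne⟩
    obtain ⟨r, hr, hbad⟩ := PS.bad (p.map Sum.inl)
      (fun y => {Word.letter (Sum.inr y : Alph ⊕ ℕ)}) (envL_good Alph)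
      (by
        intro s' hs'
        rw [PS.subT_map] at hs'
        obtain ⟨s, hs, rfl⟩ := hs'
        exact absfact_of_denL s (hpTempty s hs) (fun h => hpε s hs h))
      (by
        intro q' hq'
        rw [PS.subP_map] at hq'
        obtain ⟨q, hq, rfl⟩ := hq'
        exact absfactP_of_denL q (hpPempty q hq))
      ⟨t₁.map Sum.inl, t₂.map Sum.inl, by
        rw [PS.subP_map]
        exact ⟨PS.pair t₁ t₂, hmem, rfl⟩,
        fun h => hne ((TS.map_eq_eps_iff t₂ Sum.inl).1 h)⟩
    exact ⟨r, hr, hbad⟩
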